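/- Let G be a graph on [n] with connected components G_1,...,G_r of sizes n_1,...,n_r, let H be a graph on [n] each of whose connected components is contained in some G_i, and let T ⊆ [n]. Then P_T(H) + P_∅(G) = (x_i, y_i : i ∈ T) + Σ_{i=1}^r J_{K_{V(G_i)} − T}, which equals P_T(K_{V(G_1)} ∪ ... ∪ K_{V(G_r)}) and is a prime ideal. -/

import Mathlib

open MvPolynomial

section Defs

variable (K : Type*) [Field K] {V : Type*} [Fintype V] [DecidableEq V]

/-- The variable `x_i`. -/
noncomputable def xv (i : V) : MvPolynomial (Fin 2 × V) K := X (0, i)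

/-- The variable `y_i`. -/
noncomputable def yv (i : V) : MvPolynomial (Fin 2 × V) K := X (1, i)

/-- The binomial `x_i y_j - x_j y_i`. -/
noncomputable def binom (i j : V) : MvPolynomial (Fin 2 × V) K :=
  xv K i * yv K j - xv K j * yv K i

/-- The binomial edge ideal `J_G` of a simple graph `G`. -/
noncomputable def beIdeal (G : SimpleGraph V) : Ideal (MvPolynomial (Fin 2 × V) K) :=
  Ideal.span { f | ∃ i j, G.Adj i j ∧ f = binom K i j }

/-- The graph `G - T`: delete the vertices of `T` (kept as isolated vertices). -/
def delV (G : SimpleGraph V) (T : Finset V) : SimpleGraph V where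
  Adj i j := G.Adj i j ∧ i ∉ T ∧ j ∉ T
  symm := ⟨fun i j h => ⟨h.1.symm, h.2.2, h.2.1⟩⟩
  loopless := ⟨fun i h => G.irrefl h.1⟩

/-- `c_G(T)`: the number of connected components of `G - T`. -/
noncomputable def cCount (G : SimpleGraph V) (T : Finset V) : ℕ :=
  Nat.card {c : (delV G T).ConnectedComponent //
    ∃ v, v ∉ T ∧ (delV G T).connectedComponentMk v = c}

/-- The prime ideal `P_T(G) = (x_i, y_i : i ∈ T) + J_{G̃₁} + ⋯ + J_{G̃_c}`,
where the `G̃ᵢ` are complete graphs on the components of `G - T`. -/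
noncomputable def PTIdeal (G : SimpleGraph V) (T : Finset V) :
    Ideal (MvPolynomial (Fin 2 × V) K) :=
  Ideal.span ({ f | ∃ i ∈ T, f = xv K i ∨ f = yv K i } ∪
    { f | ∃ i j, i ∉ T ∧ j ∉ T ∧ i ≠ j ∧ (delV G T).Reachable i j ∧ f = binom K i j })

/-- `T` has the cut point property for `G`. -/
def hasCutPointProperty (G : SimpleGraph V) (T : Finset V) : Prop :=
  ∀ i ∈ T, cCount G (T.erase i) < cCount G T

/-- The height of an ideal: the infimum of the heights of the primes containing it. -/
noncomputable def idealHeight {R : Type*} [CommRing R] (I : Ideal R) : ℕ∞ :=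
  ⨅ P : {P : PrimeSpectrum R // I ≤ P.asIdeal}, Order.height P.1

end Defs

/-- The disjoint union of the complete graphs on the vertex sets of the connected
components of `G`, i.e. `K_{V(G₁)} ∪ ⋯ ∪ K_{V(G_r)}`. -/
def completedComps {n : ℕ} (G : SimpleGraph (Fin n)) : SimpleGraph (Fin n) where
  Adj i j := i ≠ j ∧ G.Reachable i j
  symm := ⟨fun i j ⟨hij, h⟩ => ⟨hij.symm, h.symm⟩⟩
  loopless := ⟨fun i h => h.1 rfl⟩

namespace PTAux
noncomputable section
open Classical

variable (K : Type*) [Field K] {n : ℕ} (G : SimpleGraph (Fin n)) (T : Finset (Fin n))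

/-- image variable index type -/
abbrev Tgt (G : SimpleGraph (Fin n)) := (Fin 2 × G.ConnectedComponent) ⊕ Fin n

def cc (i : Fin n) : G.ConnectedComponent := G.connectedComponentMk i

def vmap (p : Fin 2 × Fin n) : Tgt G →₀ ℕ :=
  Finsupp.single (Sum.inl (p.1, cc G p.2)) 1 + Finsupp.single (Sum.inr p.2) 1

def Md (d : (Fin 2 × Fin n) →₀ ℕ) : Tgt G →₀ ℕ := d.sum fun p k => k • vmap G p

lemma Md_zero : Md G (0 : (Fin 2 × Fin n) →₀ ℕ) = 0 := Finsupp.sum_zero_index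

lemma Md_add (a b : (Fin 2 × Fin n) →₀ ℕ) : Md G (a + b) = Md G a + Md G b :=
  Finsupp.sum_add_index' (fun p => zero_smul _ _) (fun p k l => add_smul k l _)

lemma Md_single (p : Fin 2 × Fin n) (k : ℕ) : Md G (Finsupp.single p k) = k • vmap G p :=
  Finsupp.sum_single_index (zero_smul _ _)

lemma Md_apply_inr (d : (Fin 2 × Fin n) →₀ ℕ) (i : Fin n) :
    Md G d (Sum.inr i) = d (0, i) + d (1, i) := by
  induction d using Finsupp.induction_linear with
  | zero => simp [Md_zero]
  | add f g hf hg => simp [Md_add, Finsupp.add_apply, hf, hg]; ring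
  | single p k =>
    obtain ⟨s, j⟩ := p
    rw [Md_single]
    by_cases hji : j = i
    · subst hji
      fin_cases s <;>
        simp [vmap, Finsupp.single_apply, Finsupp.smul_apply, Prod.ext_iff]
    · simp [vmap, Finsupp.single_apply, Finsupp.smul_apply, Prod.ext_iff, hji, Ne.symm hji]

lemma Md_apply_inl (d : (Fin 2 × Fin n) →₀ ℕ) (s : Fin 2) (c : G.ConnectedComponent) :
    Md G d (Sum.inl (s, c)) = ∑ i : Fin n, if cc G i = c then d (s, i) else 0 := by
  induction d using Finsupp.induction_linear with
  | zero => simp [Md_zero]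
  | add f g hf hg =>
    simp only [Md_add, Finsupp.add_apply, hf, hg, ← Finset.sum_add_distrib]
    exact Finset.sum_congr rfl fun i _ => by split_ifs <;> simp
  | single p k =>
    obtain ⟨s', j⟩ := p
    rw [Md_single]
    have : ∀ i : Fin n, (if cc G i = c then (Finsupp.single (s', j) k) (s, i) else 0)
        = if i = j then (if cc G j = c ∧ s' = s then k else 0) else 0 := by
      intro i
      by_cases hij : i = j
      · subst hij
        by_cases h1 : cc G i = c <;> by_cases h2 : s' = s <;>
          simp [Finsupp.single_apply, Prod.ext_iff, h1, h2]
      · simp [Finsupp.single_apply, Prod.ext_iff, hij, Ne.symm hij]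
    rw [Finset.sum_congr rfl fun i _ => this i, Finset.sum_ite_eq' Finset.univ j]
    by_cases h1 : cc G j = c <;> by_cases h2 : s' = s <;>
      simp [vmap, Finsupp.smul_apply, Finsupp.single_apply, Prod.ext_iff, h1, h2]


def xv' (i : Fin n) : MvPolynomial (Fin 2 × Fin n) K := X (0, i)

/-- The Segre-type map. -/
def phi : MvPolynomial (Fin 2 × Fin n) K →ₐ[K] MvPolynomial (Tgt G) K :=
  aeval fun p : Fin 2 × Fin n =>
    if p.2 ∈ T then 0 else X (Sum.inl (p.1, cc G p.2)) * X (Sum.inr p.2)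

/-- `d` avoids the variables from `T`. -/
def Tfree (d : (Fin 2 × Fin n) →₀ ℕ) : Prop := ∀ p : Fin 2 × Fin n, p.2 ∈ T → d p = 0

lemma Tfree.add_left {a b : (Fin 2 × Fin n) →₀ ℕ} (h : Tfree T (a + b)) : Tfree T a :=
  fun p hp => by have := h p hp; rw [Finsupp.add_apply] at this; omega

lemma Tfree.add_right {a b : (Fin 2 × Fin n) →₀ ℕ} (h : Tfree T (a + b)) : Tfree T b :=
  fun p hp => by have := h p hp; rw [Finsupp.add_apply] at this; omega

lemma phi_monomial_tfree (d : (Fin 2 × Fin n) →₀ ℕ) (hd : Tfree T d) (c : K) :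
    phi K G T (monomial d c) = monomial (Md G d) c := by
  induction d using Finsupp.induction with
  | zero => simp [Md_zero, phi, aeval_monomial]
  | single_add p k f hpf hk ih =>
    have h1 : Tfree T (Finsupp.single p k) := hd.add_left T
    have h2 : Tfree T f := hd.add_right T
    have hpT : p.2 ∉ T := fun hmem => by
      have := h1 p hmem; rw [Finsupp.single_apply, if_pos rfl] at this; exact hk this
    have : (monomial (Finsupp.single p k + f) c : MvPolynomial (Fin 2 × Fin n) K)
        = monomial (Finsupp.single p k) 1 * monomial f c := by
      rw [monomial_mul, one_mul]
    rw [this, map_mul, ih h2, Md_add]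
    have hX : phi K G T (monomial (Finsupp.single p k) 1)
        = monomial (Md G (Finsupp.single p k)) 1 := by
      rw [← X_pow_eq_monomial, map_pow]
      have : phi K G T (X p) = X (Sum.inl (p.1, cc G p.2)) * X (Sum.inr p.2) := by
        simp [phi, hpT]
      rw [this, Md_single]
      have : (X (Sum.inl (p.1, cc G p.2)) * X (Sum.inr p.2) : MvPolynomial (Tgt G) K)
          = monomial (vmap G p) 1 := by
        rw [X, X, monomial_mul, one_mul, vmap]
      rw [this, monomial_pow, one_pow]
    rw [hX, monomial_mul, one_mul]

lemma phi_monomial_touch (d : (Fin 2 × Fin n) →₀ ℕ) (p : Fin 2 × Fin n) (hp : p.2 ∈ T)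
    (hdp : d p ≠ 0) (c : K) : phi K G T (monomial d c) = 0 := by
  rw [phi, aeval_monomial]
  have hmem : p ∈ d.support := Finsupp.mem_support_iff.2 hdp
  rw [Finsupp.prod, Finset.prod_eq_zero hmem (by rw [if_pos hp, zero_pow hdp]), mul_zero]


def Igen : Set (MvPolynomial (Fin 2 × Fin n) K) :=
  { f | ∃ i ∈ T, f = xv K i ∨ f = yv K i } ∪
  { f | ∃ i j, i ∉ T ∧ j ∉ T ∧ i ≠ j ∧ G.Reachable i j ∧ f = binom K i j }

def Ispan : Ideal (MvPolynomial (Fin 2 × Fin n) K) := Ideal.span (Igen K G T)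

lemma hXm (a : Fin 2 × Fin n) :
    (X a : MvPolynomial (Fin 2 × Fin n) K) = monomial (Finsupp.single a 1) 1 := by
  rw [← X_pow_eq_monomial, pow_one]

lemma swap_step (d1 d2 : (Fin 2 × Fin n) →₀ ℕ) (h1 : Tfree T d1)
    (h : Md G d1 = Md G d2) (i : Fin n) (hi : d2 (0, i) < d1 (0, i)) :
    ∃ d1', Tfree T d1' ∧ Md G d1' = Md G d1 ∧
      ((monomial d1 1 - monomial d1' 1 : MvPolynomial (Fin 2 × Fin n) K) ∈ Ispan K G T) ∧
      (∑ a, Nat.dist (d1' (0, a)) (d2 (0, a))) + 2 = ∑ a, Nat.dist (d1 (0, a)) (d2 (0, a)) := by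
  have hsum : (∑ a, if cc G a = cc G i then d1 (0, a) else 0)
      = ∑ a, if cc G a = cc G i then d2 (0, a) else 0 := by
    rw [← Md_apply_inl, ← Md_apply_inl, h]
  have hrow : ∀ a, d1 (0, a) + d1 (1, a) = d2 (0, a) + d2 (1, a) := fun a => by
    rw [← Md_apply_inr, ← Md_apply_inr, h]
  have hjex : ∃ j, cc G j = cc G i ∧ d1 (0, j) < d2 (0, j) := by
    by_contra hcon
    push_neg at hcon
    have hlt : (∑ a, if cc G a = cc G i then d2 (0, a) else 0)
        < ∑ a, if cc G a = cc G i then d1 (0, a) else 0 :=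
      Finset.sum_lt_sum (fun a _ => by
          by_cases hc : cc G a = cc G i
          · simpa [hc] using hcon a hc
          · simp [hc])
        ⟨i, Finset.mem_univ i, by simpa using hi⟩
    omega
  obtain ⟨j, hjc, hj⟩ := hjex
  have hd1j : 0 < d1 (1, j) := by have := hrow j; omega
  have hij : i ≠ j := fun e => by rw [e] at hi; omega
  have hiT : i ∉ T := fun hmem => by have := h1 (0, i) hmem; omega
  have hjT : j ∉ T := fun hmem => by have := h1 (1, j) hmem; omega
  have hreach : G.Reachable i j := (SimpleGraph.ConnectedComponent.exact hjc).symm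
  set u : (Fin 2 × Fin n) →₀ ℕ := Finsupp.single (0, i) 1 + Finsupp.single (1, j) 1 with hu
  set u' : (Fin 2 × Fin n) →₀ ℕ := Finsupp.single (0, j) 1 + Finsupp.single (1, i) 1 with hu'
  set base := d1 - u with hbase
  have hne : ((0, i) : Fin 2 × Fin n) ≠ (1, j) := by simp [Prod.ext_iff]
  have hub : ∀ p, u p ≤ d1 p := by
    intro p
    rw [hu, Finsupp.add_apply, Finsupp.single_apply, Finsupp.single_apply]
    split_ifs with ha hb hb
    · exact absurd (ha.trans hb.symm) hne
    · rw [← ha]; omega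
    · rw [← hb]; omega
    · omega
  have hbu : base + u = d1 := by
    ext p
    rw [Finsupp.add_apply, hbase, Finsupp.tsub_apply]
    have := hub p; omega
  refine ⟨base + u', ?_, ?_, ?_, ?_⟩
  · intro p hp
    have hj0 : ((0 : Fin 2), j) ≠ p := fun e => hjT (by rw [← e] at hp; exact hp)
    have hi1 : ((1 : Fin 2), i) ≠ p := fun e => hiT (by rw [← e] at hp; exact hp)
    rw [Finsupp.add_apply, hbase, Finsupp.tsub_apply, h1 p hp]
    simp [hu', Finsupp.single_apply, if_neg hj0, if_neg hi1]
  · have hmu : Md G u' = Md G u := by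
      rw [hu, hu', Md_add, Md_add, Md_single, Md_single, Md_single, Md_single]
      simp only [one_smul, vmap]
      rw [show cc G j = cc G i from hjc]
      abel
    rw [Md_add, hmu, ← Md_add, hbu]
  · have key : (monomial d1 1 - monomial (base + u') 1 : MvPolynomial (Fin 2 × Fin n) K)
        = monomial base 1 * binom K i j := by
      rw [binom, xv, yv, xv, yv, hXm, hXm, hXm, hXm, monomial_mul, monomial_mul,
        mul_sub, monomial_mul, monomial_mul, ← hbu]
      rw [hu, hu']
      norm_num
    rw [key]
    exact Ideal.mul_mem_left _ _ (Ideal.subset_span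
      (Or.inr ⟨i, j, hiT, hjT, hij, hreach, rfl⟩))
  · have hu0 : ∀ a, u (0, a) = if a = i then 1 else 0 := by
      intro a
      rw [hu, Finsupp.add_apply, Finsupp.single_apply, Finsupp.single_apply]
      by_cases ha : a = i
      · subst ha; simp [Prod.ext_iff]
      · simp [Prod.ext_iff, ha, Ne.symm ha]
    have hu'0 : ∀ a, u' (0, a) = if a = j then 1 else 0 := by
      intro a
      rw [hu', Finsupp.add_apply, Finsupp.single_apply, Finsupp.single_apply]
      by_cases ha : a = j
      · subst ha; simp [Prod.ext_iff]
      · simp [Prod.ext_iff, ha, Ne.symm ha]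
    have hval : ∀ a, (base + u') (0, a) + u (0, a) = d1 (0, a) + u' (0, a) := by
      intro a
      rw [Finsupp.add_apply, hbase, Finsupp.tsub_apply]
      have := hub (0, a); omega
    have hpt : ∀ a, Nat.dist ((base + u') (0, a)) (d2 (0, a))
        + ((if a = i then 1 else 0) + (if a = j then 1 else 0))
        = Nat.dist (d1 (0, a)) (d2 (0, a)) := by
      intro a
      have h1a := hval a
      rw [hu0, hu'0] at h1a
      by_cases ha : a = i
      · subst ha
        rw [if_neg hij] at h1a ⊢
        rw [if_pos rfl] at h1a ⊢
        simp only [Nat.dist]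
        omega
      · by_cases hb : a = j
        · subst hb
          rw [if_pos rfl] at h1a ⊢
          rw [if_neg ha] at h1a ⊢
          simp only [Nat.dist]
          omega
        · rw [if_neg ha] at h1a ⊢
          rw [if_neg hb] at h1a ⊢
          simp only [Nat.dist]
          omega
    calc (∑ a, Nat.dist ((base + u') (0, a)) (d2 (0, a))) + 2
        = ∑ a, (Nat.dist ((base + u') (0, a)) (d2 (0, a))
            + ((if a = i then 1 else 0) + (if a = j then 1 else 0))) := by
          rw [Finset.sum_add_distrib, Finset.sum_add_distrib,
            Finset.sum_ite_eq' Finset.univ i, Finset.sum_ite_eq' Finset.univ j]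
          simp
      _ = ∑ a, Nat.dist (d1 (0, a)) (d2 (0, a)) := Finset.sum_congr rfl fun a _ => hpt a


lemma eq_of_x_eq (d1 d2 : (Fin 2 × Fin n) →₀ ℕ) (h : Md G d1 = Md G d2)
    (hx : ∀ a, d1 (0, a) = d2 (0, a)) : d1 = d2 := by
  have hrow : ∀ a, d1 (0, a) + d1 (1, a) = d2 (0, a) + d2 (1, a) := fun a => by
    rw [← Md_apply_inr, ← Md_apply_inr, h]
  ext p
  obtain ⟨s, a⟩ := p
  fin_cases s
  · exact hx a
  · show d1 (1, a) = d2 (1, a)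
    have := hrow a; have := hx a; omega

lemma sub_mem_aux : ∀ N (d1 d2 : (Fin 2 × Fin n) →₀ ℕ), Tfree T d1 → Tfree T d2 →
    Md G d1 = Md G d2 → (∑ a, Nat.dist (d1 (0, a)) (d2 (0, a))) ≤ N →
    (monomial d1 1 - monomial d2 1 : MvPolynomial (Fin 2 × Fin n) K) ∈ Ispan K G T := by
  intro N
  induction N with
  | zero =>
    intro d1 d2 h1 h2 h hle
    have hx : ∀ a, d1 (0, a) = d2 (0, a) := fun a =>
      Nat.eq_of_dist_eq_zero
        (Finset.sum_eq_zero_iff.1 (Nat.le_zero.1 hle) a (Finset.mem_univ a))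
    rw [eq_of_x_eq G d1 d2 h hx, sub_self]
    exact zero_mem _
  | succ N ih =>
    intro d1 d2 h1 h2 h hle
    by_cases heq : ∀ a, d1 (0, a) = d2 (0, a)
    · rw [eq_of_x_eq G d1 d2 h heq, sub_self]
      exact zero_mem _
    · push_neg at heq
      obtain ⟨a, ha⟩ := heq
      rcases Nat.lt_or_ge (d2 (0, a)) (d1 (0, a)) with hlt | hge
      · obtain ⟨d1', hT', hM', hmem, hdist⟩ := swap_step K G T d1 d2 h1 h a hlt
        have hsplit : (monomial d1 1 - monomial d2 1 : MvPolynomial (Fin 2 × Fin n) K)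
            = (monomial d1 1 - monomial d1' 1) + (monomial d1' 1 - monomial d2 1) := by ring
        rw [hsplit]
        exact add_mem hmem (ih d1' d2 hT' h2 (hM'.trans h) (by omega))
      · have hlt : d1 (0, a) < d2 (0, a) := by omega
        obtain ⟨d2', hT', hM', hmem, hdist⟩ := swap_step K G T d2 d1 h2 h.symm a hlt
        have hsplit : (monomial d1 1 - monomial d2 1 : MvPolynomial (Fin 2 × Fin n) K)
            = (monomial d1 1 - monomial d2' 1) - (monomial d2 1 - monomial d2' 1) := by ring
        rw [hsplit]
        have hsym : ∀ (e f : (Fin 2 × Fin n) →₀ ℕ),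
            (∑ b, Nat.dist (e (0, b)) (f (0, b))) = ∑ b, Nat.dist (f (0, b)) (e (0, b)) :=
          fun e f => Finset.sum_congr rfl fun b _ => Nat.dist_comm _ _
        have hd1 : (∑ b, Nat.dist (d1 (0, b)) (d2' (0, b))) ≤ N := by
          rw [hsym d1 d2']
          rw [hsym d1 d2] at hle
          omega
        exact sub_mem (ih d1 d2' h1 hT' (h.trans hM'.symm) hd1) hmem

lemma pair_sub_mem (d1 d2 : (Fin 2 × Fin n) →₀ ℕ) (h1 : Tfree T d1) (h2 : Tfree T d2)
    (h : Md G d1 = Md G d2) :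
    (monomial d1 1 - monomial d2 1 : MvPolynomial (Fin 2 × Fin n) K) ∈ Ispan K G T :=
  sub_mem_aux K G T _ d1 d2 h1 h2 h le_rfl

lemma touch_mem (d : (Fin 2 × Fin n) →₀ ℕ) (p : Fin 2 × Fin n) (hp : p.2 ∈ T)
    (hdp : d p ≠ 0) (c : K) : (monomial d c : MvPolynomial (Fin 2 × Fin n) K) ∈ Ispan K G T := by
  have hXmem : (X p : MvPolynomial (Fin 2 × Fin n) K) ∈ Igen K G T := by
    left
    obtain ⟨s, t⟩ := p
    refine ⟨t, hp, ?_⟩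
    fin_cases s
    · left; rfl
    · right; rfl
  have hle : ∀ q, Finsupp.single p 1 q ≤ d q := by
    intro q
    rw [Finsupp.single_apply]
    split_ifs with hq
    · rw [← hq]; omega
    · omega
  have hde : (d - Finsupp.single p 1) + Finsupp.single p 1 = d := by
    ext q
    rw [Finsupp.add_apply, Finsupp.tsub_apply]
    have h1 := hle q
    omega
  have hmono : (monomial d c : MvPolynomial (Fin 2 × Fin n) K)
      = monomial (d - Finsupp.single p 1) c * X p := by
    rw [hXm, monomial_mul, mul_one, hde]
  rw [hmono]
  exact Ideal.mul_mem_left _ _ (Ideal.subset_span hXmem)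

lemma ker_le_aux : ∀ N (f : MvPolynomial (Fin 2 × Fin n) K), f.support.card ≤ N →
    phi K G T f = 0 → f ∈ Ispan K G T := by
  intro N
  induction N with
  | zero =>
    intro f hcard _
    have : f = 0 := by
      rwa [Nat.le_zero, Finset.card_eq_zero, MvPolynomial.support_eq_empty] at hcard
    rw [this]; exact zero_mem _
  | succ N ih =>
    intro f hcard hker
    by_cases hf0 : f = 0
    · rw [hf0]; exact zero_mem _
    have hne : f.support.Nonempty := by
      rwa [Finset.nonempty_iff_ne_empty, ne_eq, MvPolynomial.support_eq_empty]
    obtain ⟨d0, hd0⟩ := hne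
    by_cases hA : ∃ p : Fin 2 × Fin n, p.2 ∈ T ∧ d0 p ≠ 0
    · obtain ⟨p, hpT, hdp⟩ := hA
      set g : MvPolynomial (Fin 2 × Fin n) K := monomial d0 (coeff d0 f) with hg
      have hgI : g ∈ Ispan K G T := touch_mem K G T d0 p hpT hdp _
      have hgker : phi K G T g = 0 := phi_monomial_touch K G T d0 p hpT hdp _
      have hsub : (f - g).support ⊆ f.support.erase d0 := by
        intro d hd
        rw [MvPolynomial.mem_support_iff, MvPolynomial.coeff_sub, hg, coeff_monomial] at hd
        rw [Finset.mem_erase, MvPolynomial.mem_support_iff]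
        by_cases hdd : d = d0
        · subst hdd; rw [if_pos rfl] at hd; simp at hd
        · rw [if_neg (fun e => hdd e.symm), sub_zero] at hd
          exact ⟨hdd, hd⟩
      have hcard' : (f - g).support.card ≤ N := by
        have h1 := Finset.card_le_card hsub
        have h2 := Finset.card_erase_of_mem hd0
        omega
      have hfg : f - g ∈ Ispan K G T := ih (f - g) hcard'
        (by rw [map_sub, hker, hgker, sub_zero])
      have hsplit : f = f - g + g := by ring
      rw [hsplit]; exact add_mem hfg hgI
    · push_neg at hA
      have hT0 : Tfree T d0 := fun p hp => hA p hp
      set μ := Md G d0 with hμ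
      set S := f.support.filter (fun d => Tfree T d ∧ Md G d = μ) with hS
      have hd0S : d0 ∈ S := Finset.mem_filter.2 ⟨hd0, hT0, rfl⟩
      have h1 : ∀ d ∈ f.support, coeff μ (phi K G T (monomial d (coeff d f)))
          = if d ∈ S then coeff d f else 0 := by
        intro d hd
        by_cases hdf : Tfree T d
        · rw [phi_monomial_tfree K G T d hdf, coeff_monomial]
          by_cases hMd : Md G d = μ
          · rw [if_pos hMd, if_pos (Finset.mem_filter.2 ⟨hd, hdf, hMd⟩)]
          · rw [if_neg hMd, if_neg (fun hmem => hMd (Finset.mem_filter.1 hmem).2.2)]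
        · obtain ⟨p, hp1, hp2⟩ : ∃ p : Fin 2 × Fin n, p.2 ∈ T ∧ d p ≠ 0 := by
            simp only [Tfree] at hdf; push_neg at hdf; exact hdf
          rw [phi_monomial_touch K G T d p hp1 hp2, MvPolynomial.coeff_zero,
            if_neg (fun hmem => hdf (Finset.mem_filter.1 hmem).2.1)]
      have h2 : coeff μ (phi K G T f) = ∑ d ∈ S, coeff d f := by
        conv_lhs => rw [f.as_sum]
        rw [map_sum, MvPolynomial.coeff_sum, Finset.sum_congr rfl h1]
        rw [← Finset.sum_filter]
        have hfe : Finset.filter (fun a => a ∈ S) f.support = S := by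
          rw [Finset.filter_mem_eq_inter]
          exact Finset.inter_eq_right.mpr (Finset.filter_subset _ _)
        rw [hfe]
      have hcoeff : ∑ d ∈ S, coeff d f = 0 := by rw [← h2, hker, MvPolynomial.coeff_zero]
      set g := ∑ d ∈ S, (monomial d (coeff d f) : MvPolynomial (Fin 2 × Fin n) K) with hg
      have hgI : g ∈ Ispan K G T := by
        have hkey : (∑ d ∈ S, (coeff d f) •
            ((monomial d 1 - monomial d0 1 : MvPolynomial (Fin 2 × Fin n) K))) = g := by
          rw [hg, Finset.sum_congr rfl (fun d _ => smul_sub (coeff d f)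
            ((monomial d 1 : MvPolynomial (Fin 2 × Fin n) K)) (monomial d0 1)),
            Finset.sum_sub_distrib, ← Finset.sum_smul, hcoeff, zero_smul, sub_zero]
          refine Finset.sum_congr rfl fun d _ => ?_
          rw [smul_monomial, smul_eq_mul, mul_one]
        rw [← hkey]
        refine Ideal.sum_mem _ fun d hd => ?_
        obtain ⟨hdsup, hdf, hMd⟩ := Finset.mem_filter.1 hd
        rw [MvPolynomial.smul_eq_C_mul]
        exact Ideal.mul_mem_left _ _ (pair_sub_mem K G T d d0 hdf hT0 hMd)
      have hgker : phi K G T g = 0 := by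
        have hmon : ∀ d ∈ S, phi K G T (monomial d (coeff d f))
            = monomial μ (coeff d f) := by
          intro d hd
          obtain ⟨_, hdf, hMd⟩ := Finset.mem_filter.1 hd
          rw [phi_monomial_tfree K G T d hdf, hMd]
        rw [hg, map_sum, Finset.sum_congr rfl hmon, ← map_sum (monomial μ) (fun d => coeff d f) S,
          hcoeff, map_zero]
      have hcg : ∀ d, coeff d g = if d ∈ S then coeff d f else 0 := by
        intro d
        rw [hg, MvPolynomial.coeff_sum,
          Finset.sum_congr rfl (fun d' _ => coeff_monomial d d' (coeff d' f)),
          Finset.sum_ite_eq' S d]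
      have hsub : (f - g).support ⊆ f.support \ S := by
        intro d hd
        rw [MvPolynomial.mem_support_iff, MvPolynomial.coeff_sub, hcg] at hd
        rw [Finset.mem_sdiff, MvPolynomial.mem_support_iff]
        by_cases hdS : d ∈ S
        · rw [if_pos hdS] at hd; simp at hd
        · rw [if_neg hdS, sub_zero] at hd
          exact ⟨hd, hdS⟩
      have hcard' : (f - g).support.card ≤ N := by
        have h1' := Finset.card_le_card hsub
        have h2' : (f.support \ S).card = f.support.card - S.card :=
          Finset.card_sdiff_of_subset (Finset.filter_subset _ _)
        have h3' : 1 ≤ S.card := Finset.card_pos.2 ⟨d0, hd0S⟩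
        omega
      have hfg := ih (f - g) hcard' (by rw [map_sub, hker, hgker, sub_zero])
      have hsplit : f = f - g + g := by ring
      rw [hsplit]; exact add_mem hfg hgI

lemma le_ker : Ispan K G T ≤ RingHom.ker (phi K G T) := by
  rw [Ispan, Ideal.span_le]
  rintro f (⟨i, hiT, hf | hf⟩ | ⟨i, j, hiT, hjT, hij, hreach, hf⟩)
  · subst hf; simp [RingHom.mem_ker, xv, phi, hiT]
  · subst hf; simp [RingHom.mem_ker, yv, phi, hiT]
  · subst hf
    rw [SetLike.mem_coe, RingHom.mem_ker]
    have hc : cc G j = cc G i := SimpleGraph.ConnectedComponent.eq.mpr hreach.symm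
    simp only [binom, xv, yv, map_sub, map_mul]
    simp only [phi, aeval_X]
    rw [if_neg hiT, if_neg hjT, if_neg hjT, if_neg hiT, hc]
    ring

lemma Ispan_eq_ker : Ispan K G T = RingHom.ker (phi K G T) :=
  le_antisymm (le_ker K G T)
    (fun f hf => ker_le_aux K G T f.support.card f le_rfl (by rwa [RingHom.mem_ker] at hf))

lemma Ispan_isPrime : (Ispan K G T).IsPrime := by
  rw [Ispan_eq_ker]
  exact RingHom.ker_isPrime _

end
end PTAux


/-- If every connected component of `H` is contained in a connected
component of `G` (i.e. `H`-reachability implies `G`-reachability), then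
`P_T(H) + P_∅(G) = (x_i, y_i : i ∈ T) + Σᵢ J_{K_{V(Gᵢ)} - T} = P_T(K_{V(G₁)} ∪ ⋯ ∪ K_{V(G_r)})`,
and this ideal is prime. -/
theorem PTIdeal_add_Pempty (K : Type*) [Field K] (n : ℕ) (G H : SimpleGraph (Fin n))
    (T : Finset (Fin n)) (hH : ∀ i j : Fin n, H.Reachable i j → G.Reachable i j) :
    PTIdeal K H T + PTIdeal K G ∅ =
        Ideal.span ({ f | ∃ i ∈ T, f = xv K i ∨ f = yv K i } ∪
          { f | ∃ i j, i ∉ T ∧ j ∉ T ∧ i ≠ j ∧ G.Reachable i j ∧ f = binom K i j }) ∧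
      PTIdeal K H T + PTIdeal K G ∅ = PTIdeal K (completedComps G) T ∧
      (PTIdeal K H T + PTIdeal K G ∅).IsPrime := by
  classical
  have hG0 : delV G ∅ = G := by ext a b; simp [delV]
  have hle : delV H T ≤ H := fun _ _ hab => hab.1
  have hbin : ∀ i j : Fin n, i ≠ j → G.Reachable i j →
      binom K i j ∈ PTAux.Ispan K G T := by
    intro i j hij hr
    by_cases hiT : i ∈ T
    · have hx : xv K i ∈ PTAux.Ispan K G T :=
        Ideal.subset_span (Or.inl ⟨i, hiT, Or.inl rfl⟩)
      have hy : yv K i ∈ PTAux.Ispan K G T :=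
        Ideal.subset_span (Or.inl ⟨i, hiT, Or.inr rfl⟩)
      have hb : binom K i j = yv K j * xv K i - xv K j * yv K i := by rw [binom]; ring
      rw [hb]
      exact sub_mem (Ideal.mul_mem_left _ _ hx) (Ideal.mul_mem_left _ _ hy)
    by_cases hjT : j ∈ T
    · have hx : xv K j ∈ PTAux.Ispan K G T :=
        Ideal.subset_span (Or.inl ⟨j, hjT, Or.inl rfl⟩)
      have hy : yv K j ∈ PTAux.Ispan K G T :=
        Ideal.subset_span (Or.inl ⟨j, hjT, Or.inr rfl⟩)
      have hb : binom K i j = xv K i * yv K j - yv K i * xv K j := by rw [binom]; ring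
      rw [hb]
      exact sub_mem (Ideal.mul_mem_left _ _ hy) (Ideal.mul_mem_left _ _ hx)
    · exact Ideal.subset_span (Or.inr ⟨i, j, hiT, hjT, hij, hr, rfl⟩)
  have key : PTIdeal K H T + PTIdeal K G ∅ = PTAux.Ispan K G T := by
    rw [PTIdeal, PTIdeal, Submodule.add_eq_sup, ← Ideal.span_union]
    apply le_antisymm
    · rw [Ideal.span_le]
      rintro f (h | h)
      · rcases h with hA | ⟨i, j, hiT, hjT, hij, hr, rfl⟩
        · exact Ideal.subset_span (Or.inl hA)
        · exact hbin i j hij (hH i j (hr.mono hle))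
      · rcases h with ⟨i, hi, _⟩ | ⟨i, j, _, _, hij, hr, rfl⟩
        · exact absurd hi (Finset.notMem_empty i)
        · exact hbin i j hij (by rwa [hG0] at hr)
    · rw [PTAux.Ispan, PTAux.Igen, Ideal.span_le]
      rintro f (hA | ⟨i, j, hiT, hjT, hij, hr, rfl⟩)
      · exact Ideal.subset_span (Or.inl (Or.inl hA))
      · refine Ideal.subset_span (Or.inr (Or.inr
          ⟨i, j, Finset.notMem_empty i, Finset.notMem_empty j, hij, ?_, rfl⟩))
        rw [hG0]; exact hr
  have hfwd : ∀ i j : Fin n, (delV (completedComps G) T).Reachable i j → G.Reachable i j := by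
    intro i j h
    obtain ⟨w⟩ := h
    induction w with
    | nil => exact SimpleGraph.Reachable.refl _
    | cons hadj _ ih => exact (hadj.1.2).trans ih
  have key2 : PTAux.Ispan K G T = PTIdeal K (completedComps G) T := by
    rw [PTAux.Ispan, PTAux.Igen, PTIdeal]
    apply le_antisymm <;> rw [Ideal.span_le]
    · rintro f (hA | ⟨i, j, hiT, hjT, hij, hr, rfl⟩)
      · exact Ideal.subset_span (Or.inl hA)
      · exact Ideal.subset_span (Or.inr ⟨i, j, hiT, hjT, hij,
          SimpleGraph.Adj.reachable ⟨⟨hij, hr⟩, hiT, hjT⟩, rfl⟩)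
    · rintro f (hA | ⟨i, j, hiT, hjT, hij, hr, rfl⟩)
      · exact Ideal.subset_span (Or.inl hA)
      · exact Ideal.subset_span (Or.inr ⟨i, j, hiT, hjT, hij, hfwd i j hr, rfl⟩)
  refine ⟨key, key.trans key2, ?_⟩
  rw [key]
  exact PTAux.Ispan_isPrime K G T
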